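/- arXiv:1510.07678 — 2 statements merged into one kernel-verified Lean document; each statement's English description precedes it below -/
import Mathlib

section
/- Let C be a flag pure normal simplicial complex, S a nonempty set of vertices of C, and Γ=[F_0,…,F_N] a monotone conservative path towards S. Let x and y be consecutive anchors along Γ, with x coming first. If z is a vertex adjacent to y in the 1-skeleton of C and z belongs to a facet F_i of Γ anchored at x, then z belongs to every facet F_j with i ≤ j ≤ m, where F_m is the first facet of Γ anchored at y. -/
/-! Common definitions: pure simplicial complexes (represented by their facet sets),
vertex-distance, links, ordered facets, vectors of distances, admissibility, and
monotone/conservative dual paths, following Adiprasito–Benedetti's combinatorial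
segments. -/

open scoped Classical

noncomputable section

namespace MCP

variable {V : Type} [DecidableEq V] [Fintype V]

/-- The vertex set of the complex whose set of facets is `C`. -/
def verts (C : Finset (Finset V)) : Finset V := C.sup id

/-- `f` is a face of the pure complex with facet set `C`. -/
def IsFace (C : Finset (Finset V)) (f : Finset V) : Prop := ∃ F ∈ C, f ⊆ F

/-- `C` is pure of dimension `d - 1`: every facet has `d` vertices. -/
def Pure (C : Finset (Finset V)) (d : ℕ) : Prop := ∀ F ∈ C, F.card = d

/-- The 1-skeleton of the complex: two vertices are joined iff they lie in a common facet. -/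
def skeleton (C : Finset (Finset V)) : SimpleGraph V where
  Adj u v := u ≠ v ∧ ∃ F ∈ C, u ∈ F ∧ v ∈ F
  symm := by
    constructor
    rintro u v ⟨h, F, hF, hu, hv⟩
    exact ⟨h.symm, F, hF, hv, hu⟩
  loopless := by constructor; rintro u ⟨h, -⟩; exact h rfl

/-- Two facets are adjacent in the dual graph iff they differ in a single vertex. -/
def AdjFacets (F G : Finset V) : Prop :=
  F ≠ G ∧ F.card = G.card ∧ (F ∩ G).card + 1 = F.card

/-- A dual path: a list of facets of `C` in which consecutive facets are adjacent. -/
def IsDualPath (C : Finset (Finset V)) (P : List (Finset V)) : Prop :=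
  (∀ F ∈ P, F ∈ C) ∧ P.Chain' AdjFacets

/-- `C` is normal: for every face `f`, any two facets containing `f` are joined by a
dual path all of whose facets contain `f`. -/
def Normal (C : Finset (Finset V)) : Prop :=
  ∀ f : Finset V, ∀ F ∈ C, ∀ G ∈ C, f ⊆ F → f ⊆ G →
    ∃ P : List (Finset V), P.head? = some F ∧ P.getLast? = some G ∧
      (∀ H ∈ P, H ∈ C ∧ f ⊆ H) ∧ P.Chain' AdjFacets

/-- The (facet set of the) link of a vertex `x` in `C`. -/
def link (C : Finset (Finset V)) (x : V) : Finset (Finset V) :=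
  (C.filter (fun F => x ∈ F)).image (fun F => F.erase x)

/-- Vertex-distance (in the 1-skeleton) between two sets of vertices, with value `⊤`
if one of the sets is empty, and with the special `0/1` convention when the complex
is `0`-dimensional. -/
def vdistSets (C : Finset (Finset V)) (S T : Finset V) : ℕ∞ :=
  if C.sup Finset.card ≤ 1 then
    (if S.Nonempty ∧ T.Nonempty then (if (S ∩ T).Nonempty then 0 else 1) else ⊤)
  else ⨅ u ∈ S, ⨅ v ∈ T, (skeleton C).edist u v

/-- The derived target set `S'` in the link of `x`, used in the recursive definitions
of the vector of distances and of admissibility. -/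
def targetSet (C : Finset (Finset V)) (x : V) (S : Finset V) : Finset V :=
  if x ∈ S then S ∩ verts (link C x)
  else (verts (link C x)).filter
    (fun w => vdistSets C {w} S + 1 = vdistSets C {x} S)

/-- The vector of distances from an ordered facet (a list of vertices) to a target set. -/
def distVector : Finset (Finset V) → List V → Finset V → List ℕ∞
  | _, [], _ => []
  | C, x :: rest, S => vdistSets C {x} S :: distVector (link C x) rest (targetSet C x S)

/-- Admissibility of an ordering of a facet with respect to a target set: the first
vertex realizes the vertex-distance from the facet to the target set, and recursively
in the link. -/
def Admissible : Finset (Finset V) → List V → Finset V → Prop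
  | _, [], _ => True
  | C, x :: rest, S =>
      vdistSets C {x} S = vdistSets C (x :: rest).toFinset S ∧
      Admissible (link C x) rest (targetSet C x S)

/-- An ordered facet of `C`: a repetition-free list of vertices forming a facet. -/
def IsOrderedFacet (C : Finset (Finset V)) (L : List V) : Prop :=
  L.Nodup ∧ L.toFinset ∈ C

/-- A dual path of ordered facets. -/
def IsOrderedDualPath (C : Finset (Finset V)) (Γ : List (List V)) : Prop :=
  (∀ L ∈ Γ, IsOrderedFacet C L) ∧
  Γ.Chain' (fun L M => AdjFacets L.toFinset M.toFinset)

/-- A path of ordered facets is monotone towards `S` if its vectors of distances are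
strictly lexicographically decreasing. -/
def MonotonePath (C : Finset (Finset V)) (S : Finset V) (Γ : List (List V)) : Prop :=
  Γ.Chain' (fun L M => List.Lex (· < ·) (distVector C M S) (distVector C L S))

/-- The index of a step: the least position at which the two orderings differ. -/
def stepIndex (L M : List V) : ℕ := sInf {k : ℕ | L[k]? ≠ M[k]?}

/-- The step from `L` to `M` is conservative towards `S`: the removed vertex is the last
vertex of `L`, and `M` is admissibly ordered with maximum index among all admissible
reorderings. -/
def ConservativeStep (C : Finset (Finset V)) (S : Finset V) (L M : List V) : Prop :=
  (∃ x, L.getLast? = some x ∧ L.toFinset \ M.toFinset = {x}) ∧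
  Admissible C M S ∧
  ∀ M' : List V, M'.Perm M → Admissible C M' S → stepIndex L M' ≤ stepIndex L M

/-- A path of ordered facets is conservative towards `S` if its first facet is
admissibly ordered and every step is conservative. -/
def ConservativePath (C : Finset (Finset V)) (S : Finset V) (Γ : List (List V)) : Prop :=
  (∀ L ∈ Γ.head?, Admissible C L S) ∧ Γ.Chain' (ConservativeStep C S)

/-- A monotone conservative dual path of ordered facets towards `S`. -/
def MonoConsPath (C : Finset (Finset V)) (S : Finset V) (Γ : List (List V)) : Prop :=
  IsOrderedDualPath C Γ ∧ MonotonePath C S Γ ∧ ConservativePath C S Γ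

/-- The path `Γ` starts at the facet `F`. -/
def StartsAt (Γ : List (List V)) (F : Finset V) : Prop :=
  ∃ L, Γ.head? = some L ∧ L.toFinset = F

/-- The path `Γ` ends at the facet `F`. -/
def EndsAt (Γ : List (List V)) (F : Finset V) : Prop :=
  ∃ L, Γ.getLast? = some L ∧ L.toFinset = F

/-- `C` is flag: every set of vertices of `C` pairwise joined by edges of `C` is a face. -/
def Flag (C : Finset (Finset V)) : Prop :=
  ∀ T : Finset V, T ⊆ verts C →
    (∀ u ∈ T, ∀ v ∈ T, u ≠ v → (skeleton C).Adj u v) → IsFace C T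

/-- A critical clique: a clique of the 1-skeleton that becomes a face after removing a
suitable vertex. -/
def CriticalClique (C : Finset (Finset V)) (T : Finset V) : Prop :=
  (∀ u ∈ T, ∀ v ∈ T, u ≠ v → (skeleton C).Adj u v) ∧ ∃ v ∈ T, IsFace C (T.erase v)

/-- `C` is `k`-banner: every critical clique with at least `k + 1` vertices is a face. -/
def Banner (C : Finset (Finset V)) (k : ℕ) : Prop :=
  ∀ T : Finset V, CriticalClique C T → k + 1 ≤ T.card → IsFace C T

/-- A pure `(d-1)`-complex is a pseudomanifold (possibly with boundary) if every
`(d-2)`-dimensional face lies in at most two facets. -/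
def Pseudomanifold (C : Finset (Finset V)) (d : ℕ) : Prop :=
  ∀ f : Finset V, f.card + 1 = d → IsFace C f → (C.filter (fun F => f ⊆ F)).card ≤ 2

/-- A pure `(d-1)`-complex is a pseudomanifold without boundary if every
`(d-2)`-dimensional face lies in exactly two facets. -/
def PseudomanifoldNoBoundary (C : Finset (Finset V)) (d : ℕ) : Prop :=
  ∀ f : Finset V, f.card + 1 = d → IsFace C f → (C.filter (fun F => f ⊆ F)).card = 2

/-- The join of two complexes (given by their facet sets, on disjoint vertex sets). -/
def join (C₁ C₂ : Finset (Finset V)) : Finset (Finset V) :=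
  (C₁ ×ˢ C₂).image (fun p => p.1 ∪ p.2)

/-- The one-point-suspension of `C` at the vertex `v`; the two new suspension vertices
are `Sum.inr false` and `Sum.inr true`. -/
def ops (C : Finset (Finset V)) (v : V) : Finset (Finset (V ⊕ Bool)) :=
  ((C.filter (fun F => v ∈ F)).image
      (fun F => ((F.erase v).image Sum.inl) ∪ {Sum.inr false, Sum.inr true}))
  ∪ ((C.filter (fun F => v ∉ F)).image (fun F => (F.image Sum.inl) ∪ {Sum.inr false}))
  ∪ ((C.filter (fun F => v ∉ F)).image (fun F => (F.image Sum.inl) ∪ {Sum.inr true}))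

/-- The degree of a vertex in the 1-skeleton of `C`. -/
def degree (C : Finset (Finset V)) (x : V) : ℕ :=
  (Finset.univ.filter fun w => (skeleton C).Adj x w).card

/-- Vertex-decomposability of a pure complex given by its facet set: either a single
simplex, or there is a vertex whose deletion stays pure of the same dimension and whose
link and deletion are both vertex-decomposable.  (The condition
`∀ F ∈ C, ∃ G ∈ C, x ∉ G ∧ F.erase x ⊆ G` expresses that the deletion of `x` is pure
of the same dimension, so that its facets are the facets of `C` avoiding `x`.) -/
inductive VertexDecomposable : Finset (Finset V) → Prop
  | simplex (F : Finset V) : VertexDecomposable {F}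
  | step (C : Finset (Finset V)) (x : V) (hx : x ∈ verts C)
      (hdelpure : ∀ F ∈ C, ∃ G ∈ C, x ∉ G ∧ F.erase x ⊆ G)
      (hlink : VertexDecomposable (link C x))
      (hdel : VertexDecomposable (C.filter (fun F => x ∉ F))) :
      VertexDecomposable C

/-- The maximum length (number of steps) of a monotone conservative path in `C`, over
all nonempty target sets of vertices of `C`. -/
def maxl (C : Finset (Finset V)) : ℕ :=
  sSup {n : ℕ | ∃ (S : Finset V) (Γ : List (List V)), S.Nonempty ∧ S ⊆ verts C ∧
    MonoConsPath C S Γ ∧ Γ.length = n + 1}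

/-- `CombSeg C Γ S x₀`: the dual path `Γ` is a combinatorial segment in `C` from its
first facet to the target set `S`, anchored at `x₀` (Adiprasito–Benedetti). -/
inductive CombSeg : Finset (Finset V) → List (Finset V) → Finset V → V → Prop
  | intersects (C : Finset (Finset V)) (F S : Finset V) (x₀ : V)
      (hF : F ∈ C) (hx : x₀ ∈ F) (hFS : (F ∩ S).Nonempty) :
      CombSeg C [F] S x₀
  | dimOne (C : Finset (Finset V)) (S : Finset V) (x₀ v : V)
      (hdim : ∀ F ∈ C, F.card = 1)
      (h₁ : {x₀} ∈ C) (h₂ : {v} ∈ C) (hx : x₀ ∉ S) (hv : v ∈ S) :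
      CombSeg C [{x₀}, {v}] S x₀
  | step (C : Finset (Finset V)) (F₀ : Finset V) (Γ₁ Γ₂ : List (Finset V))
      (Fk S : Finset V) (x₀ y x₀' : V) (ℓ : ℕ∞)
      (hdim : ∀ F ∈ C, 2 ≤ F.card)
      (hmem : ∀ F ∈ F₀ :: Γ₁, F ∈ C)
      (hdisj : ∀ F ∈ F₀ :: Γ₁, F ∩ S = ∅)
      (hℓ : vdistSets C F₀ S = ℓ)
      (hbefore : ∀ F ∈ F₀ :: Γ₁, ¬ vdistSets C F S < ℓ)
      (hafter : vdistSets C Fk S < ℓ)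
      (hy : y ∈ Fk)
      (hyd : vdistSets C {y} S + 1 = ℓ)
      (hyuniq : ∀ z ∈ Fk, vdistSets C {z} S + 1 = ℓ → z = y)
      (hx₀ : ∀ F ∈ F₀ :: Γ₁, x₀ ∈ F) (hx₀k : x₀ ∈ Fk)
      (hlink : CombSeg (link C x₀)
          (((F₀ :: Γ₁) ++ [Fk]).map (fun F => F.erase x₀))
          ((verts (link C x₀)).filter (fun w => vdistSets C {w} S + 1 = ℓ)) x₀')
      (htail : CombSeg C (Fk :: Γ₂) S y) :
      CombSeg C (F₀ :: Γ₁ ++ Fk :: Γ₂) S x₀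

end MCP

set_option linter.unusedSectionVars false
namespace MCP
variable {V : Type} [DecidableEq V] [Fintype V]

lemma mem_verts {C : Finset (Finset V)} {F : Finset V} {v : V} (hF : F ∈ C) (hv : v ∈ F) :
    v ∈ verts C := Finset.mem_sup.2 ⟨F, hF, hv⟩

lemma erase_mem_link {C : Finset (Finset V)} {F : Finset V} {x : V} (hF : F ∈ C) (hx : x ∈ F) :
    F.erase x ∈ link C x :=
  Finset.mem_image.2 ⟨F, Finset.mem_filter.2 ⟨hF, hx⟩, rfl⟩

lemma mem_link_iff {C : Finset (Finset V)} {x : V} {f : Finset V} :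
    f ∈ link C x ↔ ∃ F ∈ C, x ∈ F ∧ f = F.erase x := by
  unfold link
  simp only [Finset.mem_image, Finset.mem_filter]
  constructor
  · rintro ⟨F, ⟨hF, hx⟩, rfl⟩; exact ⟨F, hF, hx, rfl⟩
  · rintro ⟨F, hF, hx, rfl⟩; exact ⟨F, ⟨hF, hx⟩, rfl⟩

lemma pure_link {C : Finset (Finset V)} {d : ℕ} {x : V} (h : Pure C d) :
    Pure (link C x) (d - 1) := by
  intro f hf
  obtain ⟨F, hF, hx, rfl⟩ := mem_link_iff.1 hf
  rw [Finset.card_erase_of_mem hx, h F hF]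

lemma adj_of_common_facet {C : Finset (Finset V)} {F : Finset V} {u v : V}
    (hF : F ∈ C) (hu : u ∈ F) (hv : v ∈ F) (hne : u ≠ v) : (skeleton C).Adj u v :=
  ⟨hne, F, hF, hu, hv⟩

lemma flag_link {C : Finset (Finset V)} {x : V} (h : Flag C) (hx : x ∈ verts C) :
    Flag (link C x) := by
  intro T hT hadj
  have hTv : ∀ u ∈ T, ∃ F ∈ C, x ∈ F ∧ u ∈ F ∧ u ≠ x := by
    intro u hu
    obtain ⟨f, hf, huf⟩ := Finset.mem_sup.1 (hT hu)
    obtain ⟨F, hF, hxF, rfl⟩ := mem_link_iff.1 hf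
    exact ⟨F, hF, hxF, Finset.mem_of_mem_erase huf, Finset.ne_of_mem_erase huf⟩
  have hclique : ∀ u ∈ insert x T, ∀ v ∈ insert x T, u ≠ v → (skeleton C).Adj u v := by
    intro u hu v hv hne
    rcases eq_or_ne u x with rfl | hux
    · have hv' : v ∈ T := (Finset.mem_insert.1 hv).resolve_left (Ne.symm hne)
      obtain ⟨F, hF, hxF, hvF, _⟩ := hTv v hv'
      exact adj_of_common_facet hF hxF hvF hne
    · have hu' : u ∈ T := (Finset.mem_insert.1 hu).resolve_left hux
      rcases eq_or_ne v x with rfl | hvx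
      · obtain ⟨F, hF, hxF, huF, _⟩ := hTv u hu'
        exact adj_of_common_facet hF huF hxF hne
      · have hv' : v ∈ T := (Finset.mem_insert.1 hv).resolve_left hvx
        obtain ⟨hne', f, hf, huf, hvf⟩ := hadj u hu' v hv' hne
        obtain ⟨F, hF, hxF, rfl⟩ := mem_link_iff.1 hf
        exact adj_of_common_facet hF (Finset.mem_of_mem_erase huf)
          (Finset.mem_of_mem_erase hvf) hne
  have hsub : insert x T ⊆ verts C := by
    intro u hu
    rcases eq_or_ne u x with rfl | hux
    · exact hx
    · obtain ⟨F, hF, _, huF, _⟩ := hTv u ((Finset.mem_insert.1 hu).resolve_left hux)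
      exact mem_verts hF huF
  obtain ⟨G, hG, hTG⟩ := h (insert x T) hsub hclique
  refine ⟨G.erase x, erase_mem_link hG (hTG (Finset.mem_insert_self x T)), ?_⟩
  intro u hu
  exact Finset.mem_erase.2 ⟨(hTv u hu).choose_spec.2.2.2, hTG (Finset.mem_insert_of_mem hu)⟩

lemma not_small {C : Finset (Finset V)} {H : Finset V} (hH : H ∈ C) (h2 : 2 ≤ H.card) :
    ¬ C.sup Finset.card ≤ 1 := by
  intro h
  exact absurd (le_trans (Finset.le_sup (f := Finset.card) hH) h) (by omega)

lemma vdistSets_eq_inf {C : Finset (Finset V)} (hbig : ¬ C.sup Finset.card ≤ 1)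
    (S T : Finset V) :
    vdistSets C S T = ⨅ u ∈ S, ⨅ v ∈ T, (skeleton C).edist u v := if_neg hbig

lemma vdist_single {C : Finset (Finset V)} (hbig : ¬ C.sup Finset.card ≤ 1)
    (u : V) (T : Finset V) :
    vdistSets C {u} T = ⨅ v ∈ T, (skeleton C).edist u v := by
  rw [vdistSets_eq_inf hbig]
  simp

lemma vdist_le_of_mem {C : Finset (Finset V)} (hbig : ¬ C.sup Finset.card ≤ 1)
    {F T : Finset V} {u : V} (hu : u ∈ F) :
    vdistSets C F T ≤ vdistSets C {u} T := by
  rw [vdistSets_eq_inf hbig, vdist_single hbig]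
  exact iInf₂_le u hu

lemma vdist_single_le_edist {C : Finset (Finset V)} (hbig : ¬ C.sup Finset.card ≤ 1)
    {T : Finset V} {u v : V} (hv : v ∈ T) :
    vdistSets C {u} T ≤ (skeleton C).edist u v := by
  rw [vdist_single hbig]
  exact iInf₂_le v hv

lemma vdist_single_pos {C : Finset (Finset V)} (hbig : ¬ C.sup Finset.card ≤ 1)
    {T : Finset V} {u : V} (hu : u ∉ T) :
    1 ≤ vdistSets C {u} T := by
  rw [vdist_single hbig]
  refine le_iInf₂ fun v hv => ?_
  have : u ≠ v := fun h => hu (h ▸ hv)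
  rw [ENat.one_le_iff_ne_zero]
  simpa [SimpleGraph.edist_eq_zero_iff]

lemma vdist_single_zero {C : Finset (Finset V)} (hbig : ¬ C.sup Finset.card ≤ 1)
    {T : Finset V} {u : V} (hu : u ∈ T) :
    vdistSets C {u} T = 0 :=
  le_antisymm (le_trans (vdist_single_le_edist hbig hu) (by simp [SimpleGraph.edist_self]))
    (zero_le)

lemma vdist_facet_pos {C : Finset (Finset V)} (hbig : ¬ C.sup Finset.card ≤ 1)
    {F T : Finset V} (h : ∀ u ∈ F, u ∉ T) :
    1 ≤ vdistSets C F T := by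
  rw [vdistSets_eq_inf hbig]
  refine le_iInf₂ fun u hu => le_iInf₂ fun v hv => ?_
  have : u ≠ v := fun he => h u hu (he ▸ hv)
  rw [ENat.one_le_iff_ne_zero]
  simpa [SimpleGraph.edist_eq_zero_iff]

lemma vdist_facet_zero {C : Finset (Finset V)} (hbig : ¬ C.sup Finset.card ≤ 1)
    {F T : Finset V} {u : V} (huF : u ∈ F) (huT : u ∈ T) :
    vdistSets C F T = 0 :=
  le_antisymm (le_trans (vdist_le_of_mem hbig huF) (le_of_eq (vdist_single_zero hbig huT)))
    (zero_le)

lemma vdist_adj_le_one {C : Finset (Finset V)} (hbig : ¬ C.sup Finset.card ≤ 1)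
    {T : Finset V} {z y : V} (h : (skeleton C).Adj z y) (hy : y ∈ T) :
    vdistSets C {z} T ≤ 1 :=
  le_trans (vdist_single_le_edist hbig hy)
    (le_of_eq (SimpleGraph.edist_eq_one_iff_adj.2 h))

lemma vdist_single_attained {C : Finset (Finset V)} (hbig : ¬ C.sup Finset.card ≤ 1)
    {T : Finset V} (hT : T.Nonempty) (u : V) :
    ∃ v ∈ T, vdistSets C {u} T = (skeleton C).edist u v := by
  obtain ⟨v, hv, hmin⟩ := Finset.exists_min_image T (fun v => (skeleton C).edist u v) hT
  refine ⟨v, hv, le_antisymm (vdist_single_le_edist hbig hv) ?_⟩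
  rw [vdist_single hbig]
  exact le_iInf₂ hmin

lemma vdistSets_small {C : Finset (Finset V)} (hbig : C.sup Finset.card ≤ 1)
    (S T : Finset V) :
    vdistSets C S T =
      if S.Nonempty ∧ T.Nonempty then (if (S ∩ T).Nonempty then 0 else 1) else ⊤ :=
  if_pos hbig

lemma vdist_adj_succ_le {C : Finset (Finset V)} (hbig : ¬ C.sup Finset.card ≤ 1)
    {T : Finset V} {x y : V} (h : (skeleton C).Adj x y) :
    vdistSets C {x} T ≤ vdistSets C {y} T + 1 := by
  rcases T.eq_empty_or_nonempty with rfl | hT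
  · have e2 : vdistSets C {y} (∅ : Finset V) = ⊤ := by
      rw [vdist_single hbig]; simp
    rw [e2]
    have : (⊤ : ℕ∞) + 1 = ⊤ := by simp
    rw [this]
    exact le_top
  · obtain ⟨v, hv, heq⟩ := vdist_single_attained hbig hT y
    calc vdistSets C {x} T ≤ (skeleton C).edist x v := vdist_single_le_edist hbig hv
      _ ≤ (skeleton C).edist x y + (skeleton C).edist y v := SimpleGraph.edist_triangle
      _ = vdistSets C {y} T + 1 := by
          rw [SimpleGraph.edist_eq_one_iff_adj.2 h, heq, add_comm]

lemma exists_realizer (C : Finset (Finset V)) (T : Finset V) {G : Finset V}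
    (hG : G.Nonempty) : ∃ u ∈ G, vdistSets C {u} T = vdistSets C G T := by
  by_cases hbig : C.sup Finset.card ≤ 1
  · rcases T.eq_empty_or_nonempty with rfl | hT
    · obtain ⟨u, hu⟩ := hG
      refine ⟨u, hu, ?_⟩
      have c1 : ¬ (({u} : Finset V).Nonempty ∧ (∅ : Finset V).Nonempty) := by simp
      have c2 : ¬ (G.Nonempty ∧ (∅ : Finset V).Nonempty) := by simp
      rw [vdistSets_small hbig, vdistSets_small hbig, if_neg c1, if_neg c2]
    · rcases (G ∩ T).eq_empty_or_nonempty with hGT | hGT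
      · obtain ⟨u, hu⟩ := hG
        have huT : u ∉ T := by
          intro huT
          have : u ∈ G ∩ T := Finset.mem_inter.2 ⟨hu, huT⟩
          rw [hGT] at this; exact absurd this (Finset.notMem_empty u)
        refine ⟨u, hu, ?_⟩
        have c1 : ({u} : Finset V).Nonempty ∧ T.Nonempty := ⟨Finset.singleton_nonempty u, hT⟩
        have c2 : G.Nonempty ∧ T.Nonempty := ⟨⟨u, hu⟩, hT⟩
        have c3 : ¬ (({u} : Finset V) ∩ T).Nonempty := by
          simp [Finset.singleton_inter_of_notMem huT]
        have c4 : ¬ (G ∩ T).Nonempty := by simp [hGT]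
        rw [vdistSets_small hbig, vdistSets_small hbig, if_pos c1, if_pos c2,
          if_neg c3, if_neg c4]
      · obtain ⟨u, hu⟩ := hGT
        rw [Finset.mem_inter] at hu
        refine ⟨u, hu.1, ?_⟩
        have c1 : ({u} : Finset V).Nonempty ∧ T.Nonempty := ⟨Finset.singleton_nonempty u, hT⟩
        have c2 : G.Nonempty ∧ T.Nonempty := ⟨⟨u, hu.1⟩, hT⟩
        have c3 : (({u} : Finset V) ∩ T).Nonempty := ⟨u, by simp [hu.2]⟩
        have c4 : (G ∩ T).Nonempty := ⟨u, Finset.mem_inter.2 hu⟩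
        rw [vdistSets_small hbig, vdistSets_small hbig, if_pos c1, if_pos c2,
          if_pos c3, if_pos c4]
  · obtain ⟨u, hu, hmin⟩ := Finset.exists_min_image G
      (fun u => vdistSets C {u} T) hG
    refine ⟨u, hu, le_antisymm ?_ (vdist_le_of_mem hbig hu)⟩
    rw [vdistSets_eq_inf hbig G T]
    refine le_iInf₂ fun w hw => ?_
    rw [← vdist_single hbig w T]
    exact hmin w hw

lemma admissible_cons {C : Finset (Finset V)} {a : V} {l : List V} {T : Finset V} :
    Admissible C (a :: l) T ↔
      (vdistSets C {a} T = vdistSets C (a :: l).toFinset T ∧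
        Admissible (link C a) l (targetSet C a T)) := Iff.rfl

lemma distVector_cons (C : Finset (Finset V)) (a : V) (l : List V) (T : Finset V) :
    distVector C (a :: l) T =
      vdistSets C {a} T :: distVector (link C a) l (targetSet C a T) := rfl

/-- Existence of admissible orderings with a prescribed realizing first vertex. -/
lemma exists_admissible_aux : ∀ (n : ℕ) (C : Finset (Finset V)) (T F : Finset V) (v : V),
    F.card ≤ n → v ∈ F → vdistSets C {v} T = vdistSets C F T →
    ∃ A : List V, A.Nodup ∧ A.toFinset = F ∧ A.head? = some v ∧ Admissible C A T := by
  intro n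
  induction n with
  | zero => intro C T F v hcard hv _
            exact absurd (Finset.card_pos.2 ⟨v, hv⟩) (by omega)
  | succ n ih =>
    intro C T F v hcard hv hreal
    rcases (F.erase v).eq_empty_or_nonempty with he | he
    · have hF : F = {v} := by
        apply Finset.eq_singleton_iff_unique_mem.2
        refine ⟨hv, fun u hu => ?_⟩
        by_contra hne
        have : u ∈ F.erase v := Finset.mem_erase.2 ⟨hne, hu⟩
        rw [he] at this; exact absurd this (Finset.notMem_empty u)
      refine ⟨[v], by simp, by simp [hF], rfl, ?_⟩
      rw [admissible_cons]
      constructor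
      · simpa using (by rw [hF] at hreal; simpa using hreal)
      · exact trivial
    · obtain ⟨u, hu, hureal⟩ := exists_realizer (link C v) (targetSet C v T) he
      obtain ⟨A', hnd, hfs, hhd, hadm⟩ := ih (link C v) (targetSet C v T) (F.erase v) u
        (by rw [Finset.card_erase_of_mem hv]; omega) hu hureal
      have hvA' : v ∉ A' := by
        intro hmem
        have : v ∈ F.erase v := hfs ▸ List.mem_toFinset.2 hmem
        exact absurd this (Finset.notMem_erase v F)
      refine ⟨v :: A', List.nodup_cons.2 ⟨hvA', hnd⟩, ?_, rfl, ?_⟩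
      · rw [List.toFinset_cons, hfs, Finset.insert_erase hv]
      · rw [admissible_cons]
        refine ⟨?_, hadm⟩
        rw [List.toFinset_cons, hfs, Finset.insert_erase hv]
        exact hreal

lemma exists_admissible {C : Finset (Finset V)} {T F : Finset V} {v : V}
    (hv : v ∈ F) (hreal : vdistSets C {v} T = vdistSets C F T) :
    ∃ A : List V, A.Nodup ∧ A.toFinset = F ∧ A.head? = some v ∧ Admissible C A T :=
  exists_admissible_aux F.card C T F v le_rfl hv hreal

/-- stepIndex lemmas -/
lemma stepIndex_eq_zero {L M : List V} (h : L[0]? ≠ M[0]?) : stepIndex L M = 0 :=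
  Nat.sInf_eq_zero.2 (Or.inl h)

lemma stepIndex_set_nonempty {L M : List V} (h : L ≠ M) :
    {k : ℕ | L[k]? ≠ M[k]?}.Nonempty := by
  by_contra hs
  rw [Set.not_nonempty_iff_eq_empty] at hs
  refine h (List.ext_getElem? fun n => ?_)
  by_contra hne
  have hmem : n ∈ {k : ℕ | L[k]? ≠ M[k]?} := hne
  rw [hs] at hmem
  exact hmem

lemma stepIndex_pos {L M : List V} (h0 : L[0]? = M[0]?) (h : L ≠ M) :
    1 ≤ stepIndex L M := by
  rw [Nat.one_le_iff_ne_zero]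
  intro hz
  have := Nat.sInf_mem (stepIndex_set_nonempty h)
  rw [show sInf {k : ℕ | L[k]? ≠ M[k]?} = stepIndex L M from rfl, hz] at this
  exact this h0

lemma stepIndex_cons {x : V} {A B : List V} (h : A ≠ B) :
    stepIndex (x :: A) (x :: B) = stepIndex A B + 1 := by
  have hset : ∀ k, k ∈ {k : ℕ | (x :: A)[k]? ≠ (x :: B)[k]?} ↔
      ∃ j ∈ {k : ℕ | A[k]? ≠ B[k]?}, k = j + 1 := by
    intro k
    cases k with
    | zero => simp
    | succ j =>
      simp only [Set.mem_setOf_eq, List.getElem?_cons_succ]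
      exact ⟨fun hj => ⟨j, hj, rfl⟩, fun ⟨j', hj', he⟩ => by
        obtain rfl : j' = j := by omega
        exact hj'⟩
  have hne := stepIndex_set_nonempty h
  have hmem := Nat.sInf_mem hne
  apply le_antisymm
  · have : stepIndex A B + 1 ∈ {k : ℕ | (x :: A)[k]? ≠ (x :: B)[k]?} :=
      (hset _).2 ⟨stepIndex A B, hmem, rfl⟩
    exact Nat.sInf_le this
  · have hne' : {k : ℕ | (x :: A)[k]? ≠ (x :: B)[k]?}.Nonempty :=
      ⟨stepIndex A B + 1, (hset _).2 ⟨stepIndex A B, hmem, rfl⟩⟩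
    obtain ⟨j, hj, he⟩ := (hset _).1 (Nat.sInf_mem hne')
    have h2 : stepIndex A B ≤ j := Nat.sInf_le hj
    have h3 : stepIndex (x :: A) (x :: B) = j + 1 := he
    omega

/-- AdjFacets lemmas -/
lemma adjFacets_sdiff_card {F G : Finset V} (h : AdjFacets F G) :
    (G \ F).card = 1 := by
  obtain ⟨hne, hcard, hinter⟩ := h
  have h1 := Finset.card_inter_add_card_sdiff G F
  rw [Finset.inter_comm] at h1
  omega

lemma adjFacets_sdiff_card' {F G : Finset V} (h : AdjFacets F G) :
    (F \ G).card = 1 := by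
  obtain ⟨hne, hcard, hinter⟩ := h
  have h1 := Finset.card_inter_add_card_sdiff F G
  omega

lemma adjFacets_erase {F G : Finset V} {x : V} (h : AdjFacets F G)
    (hxF : x ∈ F) (hxG : x ∈ G) : AdjFacets (F.erase x) (G.erase x) := by
  obtain ⟨hne, hcard, hinter⟩ := h
  refine ⟨?_, ?_, ?_⟩
  · intro he
    apply hne
    rw [← Finset.insert_erase hxF, ← Finset.insert_erase hxG, he]
  · rw [Finset.card_erase_of_mem hxF, Finset.card_erase_of_mem hxG, hcard]
  · have : F.erase x ∩ G.erase x = (F ∩ G).erase x := by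
      ext u; simp [Finset.mem_erase, Finset.mem_inter]; tauto
    rw [this, Finset.card_erase_of_mem (Finset.mem_inter.2 ⟨hxF, hxG⟩),
      Finset.card_erase_of_mem hxF]
    have hpos : 0 < (F ∩ G).card := by
      by_contra hz
      push_neg at hz
      interval_cases h : (F ∩ G).card
      · have : x ∈ F ∩ G := Finset.mem_inter.2 ⟨hxF, hxG⟩
        rw [Finset.card_eq_zero] at h
        rw [h] at this
        exact absurd this (Finset.notMem_empty x)
    omega

/-- head/last lemmas -/
lemma head_mem_toFinset {L : List V} {a : V} (h : L.head? = some a) : a ∈ L.toFinset := by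
  cases L with
  | nil => simp at h
  | cons b t => rw [List.head?] at h; injection h with h; subst h; simp

lemma head_ne_last {L : List V} {a b : V} (hnd : L.Nodup) (hlen : 2 ≤ L.length)
    (ha : L.head? = some a) (hb : L.getLast? = some b) : a ≠ b := by
  rw [List.head?_eq_getElem?] at ha
  rw [List.getLast?_eq_getElem?] at hb
  intro he
  subst he
  have h0 : 0 < L.length := by omega
  have h1 : L.length - 1 < L.length := by omega
  rw [List.getElem?_eq_getElem h0] at ha
  rw [List.getElem?_eq_getElem h1] at hb
  injection ha with ha
  injection hb with hb
  have : L[0] = L[L.length - 1] := by rw [ha, ← hb]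
  have := (List.Nodup.getElem_inj_iff hnd).1 this
  omega

lemma getLast?_tail {a : V} {t : List V} (ht : t ≠ []) :
    (a :: t).getLast? = t.getLast? := by
  cases t with
  | nil => exact absurd rfl ht
  | cons b u => simp [List.getLast?_cons_cons]

/-- the clique contradiction -/
lemma no_superclique {C : Finset (Finset V)} {d : ℕ} (hpure : Pure C d) (hflag : Flag C)
    {G : Finset V} {z : V} (hG : G ∈ C) (hGne : G.Nonempty) (hz : z ∉ G)
    (hadj : ∀ u ∈ G, (skeleton C).Adj z u) : False := by
  obtain ⟨u₀, hu₀⟩ := hGne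
  obtain ⟨_, F₀, hF₀, hzF₀, _⟩ := hadj u₀ hu₀
  have hsub : insert z G ⊆ verts C := by
    intro u hu
    rcases Finset.mem_insert.1 hu with rfl | hu
    · exact mem_verts hF₀ hzF₀
    · exact mem_verts hG hu
  have hclique : ∀ u ∈ insert z G, ∀ v ∈ insert z G, u ≠ v → (skeleton C).Adj u v := by
    intro u hu v hv hne
    rcases eq_or_ne u z with rfl | huz
    · exact hadj v ((Finset.mem_insert.1 hv).resolve_left (Ne.symm hne))
    · have hu' : u ∈ G := (Finset.mem_insert.1 hu).resolve_left huz
      rcases eq_or_ne v z with rfl | hvz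
      · exact (hadj u hu').symm
      · exact adj_of_common_facet hG hu' ((Finset.mem_insert.1 hv).resolve_left hvz) hne
  obtain ⟨H, hH, hHsub⟩ := hflag (insert z G) hsub hclique
  have h1 : (insert z G).card ≤ H.card := Finset.card_le_card hHsub
  rw [Finset.card_insert_of_notMem hz, hpure H hH, hpure G hG] at h1
  omega

lemma getElem_list_congr {α : Type _} {l : List α} {i j : ℕ} (h : i = j)
    {hi : i < l.length} : l[i]'hi = l[j]'(h ▸ hi) := by subst h; rfl

lemma enat_add_one_ne_top {n : ℕ∞} (h : n ≠ ⊤) : n + 1 ≠ ⊤ := by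
  intro hc
  rw [ENat.add_eq_top] at hc
  rcases hc with h1 | h1
  · exact h h1
  · simp at h1

lemma lex_head_le {a b : ℕ∞} {s t : List ℕ∞} (h : List.Lex (·<·) (a::s) (b::t)) : a ≤ b := by
  cases h with
  | cons h => exact le_rfl
  | rel h => exact le_of_lt h

lemma lex_cons_same {a : ℕ∞} {s t : List ℕ∞} (h : List.Lex (·<·) (a::s) (a::t)) :
    List.Lex (·<·) s t := by
  cases h with
  | cons h => exact h
  | rel h => exact absurd h (lt_irrefl a)

lemma perm_of_nodup_toFinset_eq {A B : List V} (hA : A.Nodup) (hB : B.Nodup)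
    (h : A.toFinset = B.toFinset) : A.Perm B := by
  rw [List.perm_ext_iff_of_nodup hA hB]
  intro a
  rw [← List.mem_toFinset, ← List.mem_toFinset, h]

lemma sdiff_erase_eq {F G : Finset V} {x ℓ : V} (h : F \ G = {ℓ}) (hx : x ∈ G)
    (hℓx : ℓ ≠ x) : F.erase x \ G.erase x = {ℓ} := by
  have hFG : ∀ u, u ∈ F \ G ↔ u = ℓ := fun u => by rw [h]; simp
  ext u
  simp only [Finset.mem_sdiff, Finset.mem_erase, Finset.mem_singleton] at *
  constructor
  · rintro ⟨⟨hux, huF⟩, hnot⟩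
    have huG : u ∉ G := fun huG => hnot ⟨hux, huG⟩
    exact ((hFG u).1 ⟨huF, huG⟩)
  · intro h2
    have h1 := (hFG ℓ).2 rfl
    rw [h2]
    exact ⟨⟨hℓx, h1.1⟩, fun hc => h1.2 hc.2⟩

lemma tail_toFinset {x : V} {L : List V} (hhd : L.head? = some x) (hnd : L.Nodup) :
    L.tail.toFinset = L.toFinset.erase x ∧ x ∉ L.tail.toFinset := by
  have hL : x :: L.tail = L := List.cons_head?_tail hhd
  have hx : x ∉ L.tail := by
    intro hc
    rw [← hL] at hnd
    exact (List.nodup_cons.1 hnd).1 hc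
  constructor
  · conv_rhs => rw [← hL, List.toFinset_cons]
    rw [Finset.erase_insert (by simpa using hx)]
  · simpa using hx

/-- accessors for a MonoConsPath -/
lemma monoCons_facet {C : Finset (Finset V)} {S : Finset V} {Γ : List (List V)}
    (h : MonoConsPath C S Γ) {j : ℕ} (hj : j < Γ.length) :
    (Γ[j]'hj).Nodup ∧ (Γ[j]'hj).toFinset ∈ C :=
  h.1.1 _ (List.getElem_mem hj)

lemma monoCons_adjStep {C : Finset (Finset V)} {S : Finset V} {Γ : List (List V)}
    (h : MonoConsPath C S Γ) {j : ℕ} (hj : j + 1 < Γ.length) :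
    AdjFacets (Γ[j]'(by omega)).toFinset (Γ[j+1]'hj).toFinset := by
  have := List.isChain_iff_getElem.1 h.1.2 j (by omega)
  simpa [List.get_eq_getElem] using this

lemma monoCons_lexStep {C : Finset (Finset V)} {S : Finset V} {Γ : List (List V)}
    (h : MonoConsPath C S Γ) {j : ℕ} (hj : j + 1 < Γ.length) :
    List.Lex (·<·) (distVector C (Γ[j+1]'hj) S) (distVector C (Γ[j]'(by omega)) S) := by
  have := List.isChain_iff_getElem.1 h.2.1 j (by omega)
  simpa [List.get_eq_getElem] using this

lemma monoCons_consStep {C : Finset (Finset V)} {S : Finset V} {Γ : List (List V)}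
    (h : MonoConsPath C S Γ) {j : ℕ} (hj : j + 1 < Γ.length) :
    ConservativeStep C S (Γ[j]'(by omega)) (Γ[j+1]'hj) := by
  have := List.isChain_iff_getElem.1 h.2.2.2 j (by omega)
  simpa [List.get_eq_getElem] using this

lemma monoCons_adm {C : Finset (Finset V)} {S : Finset V} {Γ : List (List V)}
    (h : MonoConsPath C S Γ) {j : ℕ} (hj : j < Γ.length) :
    Admissible C (Γ[j]'hj) S := by
  cases j with
  | zero =>
    apply h.2.2.1
    rw [List.head?_eq_getElem?, List.getElem?_eq_getElem hj]
    exact rfl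
  | succ n => exact (monoCons_consStep h hj).2.1

set_option maxHeartbeats 3000000 in
theorem main_lemma (d : ℕ) : ∀ (C : Finset (Finset V)), Pure C d → Flag C →
    ∀ (S : Finset V) (Γ : List (List V)) (x y z : V),
    MonoConsPath C S Γ →
    (∀ (j : ℕ) (hj : j < Γ.length - 1),
      (Γ[j]'(lt_of_lt_of_le hj (Nat.sub_le _ _))).head? = some x) →
    (∀ L, Γ.getLast? = some L → L.head? = some y) →
    x ≠ y →
    (∀ L, Γ.head? = some L → z ∈ L.toFinset) →
    (skeleton C).Adj z y →
    ∀ (j : ℕ) (hj : j < Γ.length), z ∈ (Γ[j]'hj).toFinset := by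
  induction d using Nat.strong_induction_on with
  | _ d ih =>
  intro C hpure hflag S Γ x y z hmc hax hlast hxy hz0 hzy
  by_cases hN1 : Γ.length ≤ 1
  · intro j hj
    have hj0 : j = 0 := by omega
    subst hj0
    apply hz0
    rw [List.head?_eq_getElem?, List.getElem?_eq_getElem hj]
  push_neg at hN1
  obtain ⟨M, hMeq⟩ : ∃ M, Γ.length = M + 1 := ⟨Γ.length - 1, by omega⟩
  have hM1 : 1 ≤ M := by omega
  -- basic data
  obtain ⟨hzyne, H₀, hH₀, hzH₀, hyH₀⟩ := hzy
  have hzy : (skeleton C).Adj z y := ⟨hzyne, H₀, hH₀, hzH₀, hyH₀⟩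
  have hd2 : 2 ≤ d := by
    have h1 := hpure H₀ hH₀
    have h2 : 1 < H₀.card := Finset.one_lt_card.2 ⟨z, hzH₀, y, hyH₀, hzyne⟩
    omega
  have hbig : ¬ C.sup Finset.card ≤ 1 := not_small hH₀ (by rw [hpure H₀ hH₀]; omega)
  have hnd : ∀ (j : ℕ) (hj : j < Γ.length), (Γ[j]'hj).Nodup :=
    fun j hj => (monoCons_facet hmc hj).1
  have hfac : ∀ (j : ℕ) (hj : j < Γ.length), (Γ[j]'hj).toFinset ∈ C :=
    fun j hj => (monoCons_facet hmc hj).2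
  have hlen : ∀ (j : ℕ) (hj : j < Γ.length), (Γ[j]'hj).length = d := by
    intro j hj
    have h1 := List.toFinset_card_of_nodup (hnd j hj)
    have h2 := hpure _ (hfac j hj)
    omega
  have headx : ∀ (j : ℕ) (hj : j < M), (Γ[j]'(by omega)).head? = some x := by
    intro j hj
    exact hax j (by omega)
  have Gxcons : ∀ (j : ℕ) (hj : j < M), x :: (Γ[j]'(by omega)).tail = Γ[j]'(by omega) :=
    fun j hj => List.cons_head?_tail (headx j hj)
  have hxmem : ∀ (j : ℕ) (hj : j < M), x ∈ (Γ[j]'(by omega)).toFinset :=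
    fun j hj => head_mem_toFinset (headx j hj)
  have hGMlast : Γ.getLast? = some (Γ[M]'(by omega)) := by
    have hidx : Γ.length - 1 = M := by omega
    rw [List.getLast?_eq_getElem?, hidx]
    exact List.getElem?_eq_getElem (by omega)
  have heady : (Γ[M]'(by omega)).head? = some y := hlast _ hGMlast
  have hymem : y ∈ (Γ[M]'(by omega)).toFinset := head_mem_toFinset heady
  -- last conservative step
  have consM : ConservativeStep C S (Γ[M-1]'(by omega)) (Γ[M]'(by omega)) := by
    have h := monoCons_consStep hmc (j := M - 1) (by omega)
    rw [getElem_list_congr (show M - 1 + 1 = M from by omega)] at h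
    exact h
  have hadjM : AdjFacets (Γ[M-1]'(by omega)).toFinset (Γ[M]'(by omega)).toFinset := by
    have h := monoCons_adjStep hmc (j := M - 1) (by omega)
    rw [getElem_list_congr (show M - 1 + 1 = M from by omega)] at h
    exact h
  obtain ⟨⟨ℓ, hℓlast, hℓdiff⟩, hadmM, hmaxM⟩ := consM
  have hxl : x ≠ ℓ :=
    head_ne_last (hnd (M-1) (by omega)) (by rw [hlen (M-1) (by omega)]; omega)
      (headx (M-1) (by omega)) hℓlast
  have hxM : x ∈ (Γ[M]'(by omega)).toFinset := by
    by_contra h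
    have h1 : x ∈ (Γ[M-1]'(by omega)).toFinset \ (Γ[M]'(by omega)).toFinset :=
      Finset.mem_sdiff.2 ⟨hxmem (M-1) (by omega), h⟩
    rw [hℓdiff] at h1
    exact hxl (Finset.mem_singleton.1 h1)
  have hvdj : ∀ (j : ℕ) (hj : j < M),
      vdistSets C {x} S = vdistSets C (Γ[j]'(by omega)).toFinset S := by
    intro j hj
    have h := monoCons_adm hmc (show j < Γ.length by omega)
    rw [← Gxcons j hj] at h
    have h1 := (admissible_cons.1 h).1
    rw [Gxcons j hj] at h1
    exact h1
  have hneqM : (Γ[M-1]'(by omega)).toFinset ≠ (Γ[M]'(by omega)).toFinset := hadjM.1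
  have hvdM_lt : vdistSets C (Γ[M]'(by omega)).toFinset S < vdistSets C {x} S := by
    have hle : vdistSets C (Γ[M]'(by omega)).toFinset S ≤ vdistSets C {x} S :=
      vdist_le_of_mem hbig hxM
    rcases lt_or_eq_of_le hle with h | h
    · exact h
    exfalso
    obtain ⟨A, hAnd, hAfs, hAhd, hAadm⟩ := exists_admissible hxM h.symm
    have hperm : A.Perm (Γ[M]'(by omega)) :=
      perm_of_nodup_toFinset_eq hAnd (hnd M (by omega)) (by rw [hAfs])
    have h1 := hmaxM A hperm hAadm
    have h2 : stepIndex (Γ[M-1]'(by omega)) (Γ[M]'(by omega)) = 0 := by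
      apply stepIndex_eq_zero
      rw [← List.head?_eq_getElem?, ← List.head?_eq_getElem?, headx (M-1) (by omega), heady]
      simp [hxy]
    have h3 : 1 ≤ stepIndex (Γ[M-1]'(by omega)) A := by
      apply stepIndex_pos
      · rw [← List.head?_eq_getElem?, ← List.head?_eq_getElem?, headx (M-1) (by omega), hAhd]
      · intro he
        exact hneqM (by rw [he, hAfs])
    omega
  have hvdy : vdistSets C {y} S = vdistSets C (Γ[M]'(by omega)).toFinset S := by
    have h := monoCons_adm hmc (show M < Γ.length by omega)
    have hcons := List.cons_head?_tail heady
    rw [← hcons] at h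
    have h1 := (admissible_cons.1 h).1
    rw [hcons] at h1
    exact h1
  have hvdylt : vdistSets C {y} S < vdistSets C {x} S := by rw [hvdy]; exact hvdM_lt
  have hyne_top : vdistSets C {y} S ≠ ⊤ := ne_top_of_lt hvdylt
  have hxyadj : (skeleton C).Adj x y :=
    adj_of_common_facet (hfac M (by omega)) hxM hymem hxy
  have hvdx_eq : vdistSets C {y} S + 1 = vdistSets C {x} S :=
    le_antisymm ((ENat.add_one_le_iff hyne_top).2 hvdylt) (vdist_adj_succ_le hbig hxyadj)
  have hxS : x ∉ S := by
    intro hxS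
    rw [vdist_single_zero hbig hxS] at hvdylt
    exact absurd hvdylt (by simp)
  have hTdef : targetSet C x S = (verts (link C x)).filter
      (fun w => vdistSets C {w} S + 1 = vdistSets C {x} S) := by
    unfold targetSet
    rw [if_neg hxS]
  have hyT : y ∈ targetSet C x S := by
    rw [hTdef, Finset.mem_filter]
    refine ⟨mem_verts (erase_mem_link (hfac M (by omega)) hxM)
      (Finset.mem_erase.2 ⟨Ne.symm hxy, hymem⟩), hvdx_eq⟩
  have hxne_top : vdistSets C {x} S ≠ ⊤ := by
    rw [← hvdx_eq]
    exact enat_add_one_ne_top hyne_top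
  have hTnotin : ∀ u ∈ targetSet C x S, ∀ (j : ℕ) (hj : j < M),
      u ∉ (Γ[j]'(by omega)).toFinset := by
    intro u hu j hj hmem
    rw [hTdef, Finset.mem_filter] at hu
    have h1 : vdistSets C (Γ[j]'(by omega)).toFinset S ≤ vdistSets C {u} S :=
      vdist_le_of_mem hbig hmem
    rw [← hvdj j hj] at h1
    have hune : vdistSets C {u} S ≠ ⊤ := by
      intro h
      rw [h] at hu
      apply hxne_top
      rw [← hu.2]
      simp
    have h2 : vdistSets C {u} S < vdistSets C {u} S :=
      lt_of_lt_of_le ((ENat.add_one_le_iff hune).1 (le_of_eq hu.2)) h1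
    exact absurd h2 (lt_irrefl _)
  have hyuniq : ∀ u ∈ targetSet C x S, u ∈ (Γ[M]'(by omega)).toFinset → u = y := by
    intro u huT huM
    have h1 : u ∈ (Γ[M]'(by omega)).toFinset \ (Γ[M-1]'(by omega)).toFinset :=
      Finset.mem_sdiff.2 ⟨huM, hTnotin u huT (M-1) (by omega)⟩
    have h2 : y ∈ (Γ[M]'(by omega)).toFinset \ (Γ[M-1]'(by omega)).toFinset :=
      Finset.mem_sdiff.2 ⟨hymem, hTnotin y hyT (M-1) (by omega)⟩
    obtain ⟨w, hw⟩ := Finset.card_eq_one.1 (adjFacets_sdiff_card hadjM)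
    rw [hw, Finset.mem_singleton] at h1 h2
    rw [h1, ← h2]
  by_cases hzx : z = x
  · subst hzx
    intro j hj
    rcases lt_or_ge j M with h | h
    · exact hxmem j h
    · have : j = M := by omega
      subst this
      exact hxM
  -- z ≠ x case
  have hz0' : z ∈ (Γ[0]'(by omega)).toFinset := by
    apply hz0
    rw [List.head?_eq_getElem?]
    exact List.getElem?_eq_getElem (by omega)
  have hzxadj : (skeleton C).Adj z x :=
    adj_of_common_facet (hfac 0 (by omega)) hz0' (hxmem 0 (by omega)) hzx
  -- the clique {x, y, z}
  have hsub₀ : ({x, y, z} : Finset V) ⊆ verts C := by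
    intro u hu
    simp only [Finset.mem_insert, Finset.mem_singleton] at hu
    rcases hu with rfl | rfl | rfl
    · exact mem_verts (hfac M (by omega)) hxM
    · exact mem_verts (hfac M (by omega)) hymem
    · exact mem_verts hH₀ hzH₀
  have hcl₀ : ∀ u ∈ ({x, y, z} : Finset V), ∀ v ∈ ({x, y, z} : Finset V),
      u ≠ v → (skeleton C).Adj u v := by
    intro u hu v hv hne
    simp only [Finset.mem_insert, Finset.mem_singleton] at hu hv
    rcases hu with rfl | rfl | rfl <;> rcases hv with rfl | rfl | rfl
    · exact absurd rfl hne
    · exact hxyadj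
    · exact hzxadj.symm
    · exact hxyadj.symm
    · exact absurd rfl hne
    · exact hzy.symm
    · exact hzxadj
    · exact hzy
    · exact absurd rfl hne
  obtain ⟨H, hH, hHsub⟩ := hflag {x, y, z} hsub₀ hcl₀
  have hxH : x ∈ H := hHsub (by simp)
  have hyH : y ∈ H := hHsub (by simp)
  have hzH : z ∈ H := hHsub (by simp)
  have hd3 : 3 ≤ d := by
    have h1 := Finset.card_le_card hHsub
    have h2 : ({x, y, z} : Finset V).card = 3 := by
      rw [Finset.card_insert_of_notMem (by simp [hxy, Ne.symm hzx]),
        Finset.card_insert_of_notMem (by simp [Ne.symm hzyne]), Finset.card_singleton]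
    rw [hpure H hH] at h1
    omega
  have hzLy : (skeleton (link C x)).Adj z y :=
    ⟨hzyne, H.erase x, erase_mem_link hH hxH, Finset.mem_erase.2 ⟨hzx, hzH⟩,
      Finset.mem_erase.2 ⟨Ne.symm hxy, hyH⟩⟩
  have hbigL : ¬ (link C x).sup Finset.card ≤ 1 := by
    apply not_small (erase_mem_link hH hxH)
    rw [Finset.card_erase_of_mem hxH, hpure H hH]
    omega

  -- tail facts
  have Rne : ∀ (j : ℕ) (hj : j < M), (Γ[j]'(by omega)).tail ≠ [] := by
    intro j hj h
    have h1 : (Γ[j]'(by omega)).tail.length = 0 := by rw [h]; rfl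
    have h2 := List.length_tail (l := Γ[j]'(by omega : j < Γ.length))
    have h3 := hlen j (by omega)
    omega
  have Rnd : ∀ (j : ℕ) (hj : j < M), (Γ[j]'(by omega)).tail.Nodup :=
    fun j hj => (hnd j (by omega)).tail
  have Rset : ∀ (j : ℕ) (hj : j < M),
      (Γ[j]'(by omega)).tail.toFinset = (Γ[j]'(by omega)).toFinset.erase x :=
    fun j hj => (tail_toFinset (headx j hj) (hnd j (by omega))).1
  have RinL : ∀ (j : ℕ) (hj : j < M), (Γ[j]'(by omega)).tail.toFinset ∈ link C x := by
    intro j hj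
    rw [Rset j hj]
    exact erase_mem_link (hfac j (by omega)) (hxmem j hj)
  have zR0 : z ∈ (Γ[0]'(by omega)).tail.toFinset := by
    rw [Rset 0 (by omega)]
    exact Finset.mem_erase.2 ⟨hzx, hz0'⟩
  have admL : ∀ (j : ℕ) (hj : j < M),
      Admissible (link C x) (Γ[j]'(by omega)).tail (targetSet C x S) := by
    intro j hj
    have h := monoCons_adm hmc (show j < Γ.length by omega)
    rw [← Gxcons j hj] at h
    exact (admissible_cons.1 h).2
  have erase_ne : ∀ {F G : Finset V}, F ≠ G → x ∈ F → x ∈ G → F.erase x ≠ G.erase x :=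
    fun {F G} h hxF hxG he =>
      h (by rw [← Finset.insert_erase hxF, ← Finset.insert_erase hxG, he])
  -- construction of the final ordered facet RM in the link
  have hGMe_ne : ((Γ[M]'(by omega)).toFinset.erase x).Nonempty := by
    rw [← Finset.card_pos, Finset.card_erase_of_mem hxM, hpure _ (hfac M (by omega))]
    omega
  obtain ⟨u₀, hu₀, hu₀real⟩ := exists_realizer (link C x) (targetSet C x S) hGMe_ne
  obtain ⟨b₀, hb₀nd, hb₀fs, hb₀hd, hb₀adm⟩ := exists_admissible hu₀ hu₀real
  have hb₀mem : b₀ ∈ b₀.permutations.toFinset.filter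
      (fun A => Admissible (link C x) A (targetSet C x S)) :=
    Finset.mem_filter.2 ⟨List.mem_toFinset.2 (List.mem_permutations.2 (List.Perm.refl b₀)),
      hb₀adm⟩
  obtain ⟨RM, hRMmem, hRMmax'⟩ := Finset.exists_max_image
    (b₀.permutations.toFinset.filter (fun A => Admissible (link C x) A (targetSet C x S)))
    (fun A => stepIndex (Γ[M-1]'(by omega)).tail A) ⟨b₀, hb₀mem⟩
  rw [Finset.mem_filter] at hRMmem
  have hRMperm : RM.Perm b₀ := List.mem_permutations.1 (List.mem_toFinset.1 hRMmem.1)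
  have hRMadm : Admissible (link C x) RM (targetSet C x S) := hRMmem.2
  have hRMfs : RM.toFinset = (Γ[M]'(by omega)).toFinset.erase x := by
    rw [List.toFinset_eq_of_perm _ _ hRMperm, hb₀fs]
  have hRMnd : RM.Nodup := (hRMperm.nodup_iff).2 hb₀nd
  have hRMmax : ∀ A, A.Perm RM → Admissible (link C x) A (targetSet C x S) →
      stepIndex (Γ[M-1]'(by omega)).tail A ≤ stepIndex (Γ[M-1]'(by omega)).tail RM := by
    intro A hp hadm
    exact hRMmax' A (Finset.mem_filter.2
      ⟨List.mem_toFinset.2 (List.mem_permutations.2 (hp.trans hRMperm)), hadm⟩)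
  have hRMne : RM ≠ [] := by
    intro h
    apply Finset.Nonempty.ne_empty hGMe_ne
    rw [← hRMfs, h]
    rfl
  have hyRM : y ∈ RM.toFinset := by
    rw [hRMfs]
    exact Finset.mem_erase.2 ⟨Ne.symm hxy, hymem⟩
  have hRMhd : RM.head? = some y := by
    have hhd : RM.head? = some (RM.head hRMne) := List.head?_eq_head hRMne
    have hcons : RM.head hRMne :: RM.tail = RM := List.cons_head?_tail hhd
    have h := hRMadm
    rw [← hcons] at h
    have h1 := (admissible_cons.1 h).1
    rw [hcons] at h1
    have h0 : vdistSets (link C x) RM.toFinset (targetSet C x S) = 0 :=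
      vdist_facet_zero hbigL hyRM hyT
    have hheadT : RM.head hRMne ∈ targetSet C x S := by
      by_contra hc
      have h2 := vdist_single_pos hbigL hc
      rw [h1, h0] at h2
      norm_num at h2
    have h3 : RM.head hRMne ∈ (Γ[M]'(by omega)).toFinset :=
      Finset.mem_of_mem_erase (hRMfs ▸ head_mem_toFinset hhd)
    rw [hhd, hyuniq _ hheadT h3]
  -- conservative steps in the link
  have hGadj : ∀ (j : ℕ) (hj : j + 1 < M),
      AdjFacets (Γ[j]'(by omega)).toFinset (Γ[j+1]'(by omega)).toFinset :=
    fun j hj => monoCons_adjStep hmc (by omega)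
  have consL : ∀ (j : ℕ) (hj : j + 1 < M), ConservativeStep (link C x) (targetSet C x S)
      (Γ[j]'(by omega)).tail (Γ[j+1]'(by omega)).tail := by
    intro j hj
    obtain ⟨⟨ℓj, hℓjlast, hℓjdiff⟩, hadmj, hmaxj⟩ :=
      monoCons_consStep hmc (show j + 1 < Γ.length by omega)
    have hxlj : x ≠ ℓj :=
      head_ne_last (hnd j (by omega)) (by rw [hlen j (by omega)]; omega)
        (headx j (by omega)) hℓjlast
    refine ⟨⟨ℓj, ?_, ?_⟩, admL (j+1) hj, ?_⟩
    · have h1 : (x :: (Γ[j]'(by omega : j < Γ.length)).tail).getLast? =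
          (Γ[j]'(by omega : j < Γ.length)).tail.getLast? := getLast?_tail (Rne j (by omega))
      rw [Gxcons j (by omega)] at h1
      rw [← h1]
      exact hℓjlast
    · rw [Rset j (by omega), Rset (j+1) hj]
      exact sdiff_erase_eq hℓjdiff (hxmem (j+1) hj) (Ne.symm hxlj)
    · intro A hp hadm
      have hp2 : (x :: A).Perm (Γ[j+1]'(by omega)) := by
        rw [← Gxcons (j+1) hj]
        exact hp.cons x
      have hadm2 : Admissible C (x :: A) S := by
        rw [admissible_cons]
        constructor
        · rw [List.toFinset_eq_of_perm _ _ hp2]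
          exact hvdj (j+1) hj
        · exact hadm
      have h1 := hmaxj (x :: A) hp2 hadm2
      have hAne : (Γ[j]'(by omega : j < Γ.length)).tail ≠ A := by
        intro he
        have h2 : A.toFinset = (Γ[j+1]'(by omega)).toFinset.erase x := by
          rw [List.toFinset_eq_of_perm _ _ hp, Rset (j+1) hj]
        rw [← he, Rset j (by omega)] at h2
        exact (erase_ne (hGadj j hj).1 (hxmem j (by omega)) (hxmem (j+1) hj)) h2
      have hBne : (Γ[j]'(by omega : j < Γ.length)).tail ≠
          (Γ[j+1]'(by omega : j + 1 < Γ.length)).tail := by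
        intro he
        apply erase_ne (hGadj j hj).1 (hxmem j (by omega)) (hxmem (j+1) hj)
        rw [← Rset j (by omega), ← Rset (j+1) hj, he]
      have e1 : stepIndex (Γ[j]'(by omega : j < Γ.length)) (x :: A) =
          stepIndex (Γ[j]'(by omega : j < Γ.length)).tail A + 1 := by
        conv_lhs => rw [← Gxcons j (by omega)]
        exact stepIndex_cons hAne
      have e2 : stepIndex (Γ[j]'(by omega : j < Γ.length))
            (Γ[j+1]'(by omega : j + 1 < Γ.length)) =
          stepIndex (Γ[j]'(by omega : j < Γ.length)).tail
            (Γ[j+1]'(by omega : j + 1 < Γ.length)).tail + 1 := by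
        conv_lhs => rw [← Gxcons j (by omega), ← Gxcons (j+1) hj]
        exact stepIndex_cons hBne
      omega
  have lexL : ∀ (j : ℕ) (hj : j + 1 < M), List.Lex (·<·)
      (distVector (link C x) (Γ[j+1]'(by omega)).tail (targetSet C x S))
      (distVector (link C x) (Γ[j]'(by omega)).tail (targetSet C x S)) := by
    intro j hj
    have h := monoCons_lexStep hmc (show j + 1 < Γ.length by omega)
    rw [← Gxcons j (by omega), ← Gxcons (j+1) hj, distVector_cons, distVector_cons] at h
    exact lex_cons_same h
  -- the common value 1
  have hRTnotin : ∀ (j : ℕ) (hj : j < M), ∀ u ∈ (Γ[j]'(by omega)).tail.toFinset,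
      u ∉ targetSet C x S := by
    intro j hj u hu hT
    refine hTnotin u hT j hj ?_
    rw [Rset j hj] at hu
    exact Finset.mem_of_mem_erase hu
  have vd1ge : ∀ (j : ℕ) (hj : j < M),
      1 ≤ vdistSets (link C x) (Γ[j]'(by omega)).tail.toFinset (targetSet C x S) :=
    fun j hj => vdist_facet_pos hbigL (fun u hu => hRTnotin j hj u hu)
  have hvdRhead : ∀ (j : ℕ) (hj : j < M),
      vdistSets (link C x) {(Γ[j]'(by omega)).tail.head (Rne j hj)} (targetSet C x S) =
      vdistSets (link C x) (Γ[j]'(by omega)).tail.toFinset (targetSet C x S) := by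
    intro j hj
    have hhd := List.head?_eq_head (Rne j hj)
    have hcons := List.cons_head?_tail hhd
    have h := admL j hj
    rw [← hcons] at h
    have h1 := (admissible_cons.1 h).1
    rw [hcons] at h1
    exact h1
  have vd1le : ∀ (j : ℕ) (hj : j < M),
      vdistSets (link C x) (Γ[j]'(by omega)).tail.toFinset (targetSet C x S) ≤ 1 := by
    intro j
    induction j with
    | zero =>
      intro hj
      exact le_trans (vdist_le_of_mem hbigL zR0) (vdist_adj_le_one hbigL hzLy hyT)
    | succ n ihn =>
      intro hj
      have h1 := lexL n hj
      rw [← List.cons_head?_tail (List.head?_eq_head (Rne n (by omega))),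
        ← List.cons_head?_tail (List.head?_eq_head (Rne (n+1) hj)),
        distVector_cons, distVector_cons] at h1
      have h2 := lex_head_le h1
      calc vdistSets (link C x) (Γ[n+1]'(by omega)).tail.toFinset (targetSet C x S)
          = vdistSets (link C x) {(Γ[n+1]'(by omega)).tail.head (Rne (n+1) hj)}
            (targetSet C x S) := (hvdRhead (n+1) hj).symm
        _ ≤ vdistSets (link C x) {(Γ[n]'(by omega)).tail.head (Rne n (by omega))}
            (targetSet C x S) := h2
        _ = vdistSets (link C x) (Γ[n]'(by omega)).tail.toFinset (targetSet C x S) :=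
            hvdRhead n (by omega)
        _ ≤ 1 := ihn (by omega)
  have vd1 : ∀ (j : ℕ) (hj : j < M),
      vdistSets (link C x) (Γ[j]'(by omega)).tail.toFinset (targetSet C x S) = 1 :=
    fun j hj => le_antisymm (vd1le j hj) (vd1ge j hj)
  -- constant heads in the link
  have hx'hd : (Γ[0]'(by omega)).tail.head? =
      some ((Γ[0]'(by omega)).tail.head (Rne 0 (by omega))) :=
    List.head?_eq_head (Rne 0 (by omega))
  set x' : V := (Γ[0]'(by omega : 0 < Γ.length)).tail.head (Rne 0 (by omega)) with hx'def
  have headsL : ∀ (j : ℕ) (hj : j < M), (Γ[j]'(by omega)).tail.head? = some x' := by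
    intro j
    induction j with
    | zero => intro hj; exact hx'hd
    | succ n ihn =>
      intro hj
      have hn : n < M := by omega
      have hprev := ihn hn
      by_contra hne
      obtain ⟨⟨ℓn, hℓnlast, hℓndiff⟩, hadmn, hmaxn⟩ := consL n hj
      have hx'Rn : x' ∈ (Γ[n]'(by omega)).tail.toFinset := head_mem_toFinset hprev
      have hx'ℓ : x' ≠ ℓn :=
        head_ne_last (Rnd n hn) (by rw [List.length_tail, hlen n (by omega)]; omega)
          hprev hℓnlast
      have hx'Rn1 : x' ∈ (Γ[n+1]'(by omega)).tail.toFinset := by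
        by_contra hc
        have h1 : x' ∈ (Γ[n]'(by omega)).tail.toFinset \
            (Γ[n+1]'(by omega)).tail.toFinset := Finset.mem_sdiff.2 ⟨hx'Rn, hc⟩
        rw [hℓndiff] at h1
        exact hx'ℓ (Finset.mem_singleton.1 h1)
      have hheq : (Γ[n]'(by omega : n < Γ.length)).tail.head (Rne n hn) = x' := by
        have h1 := List.head?_eq_head (Rne n hn)
        rw [hprev] at h1
        injection h1 with h1
        exact h1.symm
      have hv1 : vdistSets (link C x) {x'} (targetSet C x S) =
          vdistSets (link C x) (Γ[n+1]'(by omega)).tail.toFinset (targetSet C x S) := by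
        have ha := hvdRhead n hn
        rw [hheq] at ha
        rw [ha, vd1 n hn, vd1 (n+1) (by omega)]
      obtain ⟨A, hAnd, hAfs, hAhd, hAadm⟩ := exists_admissible hx'Rn1 hv1
      have hpA : A.Perm (Γ[n+1]'(by omega)).tail :=
        perm_of_nodup_toFinset_eq hAnd (Rnd (n+1) (by omega)) (by rw [hAfs])
      have h1 := hmaxn A hpA hAadm
      have hRneq : (Γ[n]'(by omega : n < Γ.length)).tail.toFinset ≠
          (Γ[n+1]'(by omega : n + 1 < Γ.length)).tail.toFinset := by
        intro he
        rw [he, Finset.sdiff_self] at hℓndiff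
        have : ℓn ∈ (∅ : Finset V) := by rw [hℓndiff]; exact Finset.mem_singleton_self ℓn
        exact absurd this (Finset.notMem_empty ℓn)
      have h2 : stepIndex (Γ[n]'(by omega : n < Γ.length)).tail
          (Γ[n+1]'(by omega : n + 1 < Γ.length)).tail = 0 := by
        apply stepIndex_eq_zero
        rw [← List.head?_eq_getElem?, ← List.head?_eq_getElem?, hprev]
        intro hc
        exact hne hc.symm
      have h3 : 1 ≤ stepIndex (Γ[n]'(by omega : n < Γ.length)).tail A := by
        apply stepIndex_pos
        · rw [← List.head?_eq_getElem?, ← List.head?_eq_getElem?, hprev, hAhd]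
        · intro he
          exact hRneq (by rw [he, hAfs])
      omega

  -- the projected path in the link
  set Λ : List (List V) := (Γ.dropLast.map List.tail) ++ [RM] with hΛdef
  have hAlen : (Γ.dropLast.map List.tail).length = M := by
    rw [List.length_map, List.length_dropLast, hMeq]
    omega
  have lenΛ : Λ.length = M + 1 := by
    rw [hΛdef, List.length_append, hAlen]
    rfl
  have ΛgetL : ∀ (j : ℕ) (hj : j < M), Λ[j]'(by omega) = (Γ[j]'(by omega)).tail := by
    intro j hj
    show ((Γ.dropLast.map List.tail) ++ [RM])[j]'(by rw [List.length_append, hAlen, List.length_singleton]; omega) =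
      (Γ[j]'(by omega)).tail
    rw [List.getElem_append_left (by omega : j < (Γ.dropLast.map List.tail).length)]
    rw [List.getElem_map]
    congr 1
    exact List.getElem_dropLast (xs := Γ) (i := j) (by rw [List.length_dropLast]; omega)
  have ΛgetM : Λ[M]'(by omega) = RM := by
    show ((Γ.dropLast.map List.tail) ++ [RM])[M]'(by rw [List.length_append, hAlen, List.length_singleton]; omega) = RM
    exact List.getElem_concat_length hAlen.symm _
  have hlastR : (Γ[M-1]'(by omega : M - 1 < Γ.length)).tail.getLast? = some ℓ := by
    have h1 : (x :: (Γ[M-1]'(by omega : M - 1 < Γ.length)).tail).getLast? =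
        (Γ[M-1]'(by omega : M - 1 < Γ.length)).tail.getLast? :=
      getLast?_tail (Rne (M-1) (by omega))
    rw [Gxcons (M-1) (by omega)] at h1
    rw [← h1]
    exact hℓlast
  have mcpΛ : MonoConsPath (link C x) (targetSet C x S) Λ := by
    refine ⟨⟨?_, ?_⟩, ?_, ?_, ?_⟩
    · intro L hL
      obtain ⟨j, hj, rfl⟩ := List.mem_iff_getElem.1 hL
      rcases lt_or_ge j M with h | h
      · rw [ΛgetL j h]
        exact ⟨Rnd j h, RinL j h⟩
      · have hjM : j = M := by omega
        have he : Λ[j]'hj = RM := by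
          rw [getElem_list_congr (l := Λ) hjM]
          exact ΛgetM
        rw [he]
        refine ⟨hRMnd, ?_⟩
        rw [hRMfs]
        exact erase_mem_link (hfac M (by omega)) hxM
    · rw [List.Chain', List.isChain_iff_getElem]
      intro i hi
      have hiM : i < M := by omega
      rcases lt_or_ge (i+1) M with h | h
      · rw [ΛgetL i hiM, ΛgetL (i+1) h, Rset i hiM, Rset (i+1) h]
        exact adjFacets_erase (hGadj i h) (hxmem i hiM) (hxmem (i+1) h)
      · have h1 : Λ[i+1]'(by omega) = RM := by
          rw [getElem_list_congr (l := Λ) (show i + 1 = M from by omega)]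
          exact ΛgetM
        have h2 : Λ[i]'(by omega) = (Γ[M-1]'(by omega)).tail := by
          rw [getElem_list_congr (l := Λ) (show i = M - 1 from by omega)]
          exact ΛgetL (M-1) (by omega)
        rw [h2, h1, Rset (M-1) (by omega), hRMfs]
        exact adjFacets_erase hadjM (hxmem (M-1) (by omega)) hxM
    · rw [MonotonePath, List.Chain', List.isChain_iff_getElem]
      intro i hi
      have hiM : i < M := by omega
      rcases lt_or_ge (i+1) M with h | h
      · rw [ΛgetL i hiM, ΛgetL (i+1) h]
        exact lexL i h
      · have h1 : Λ[i+1]'(by omega) = RM := by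
          rw [getElem_list_congr (l := Λ) (show i + 1 = M from by omega)]
          exact ΛgetM
        have h2 : Λ[i]'(by omega) = (Γ[M-1]'(by omega)).tail := by
          rw [getElem_list_congr (l := Λ) (show i = M - 1 from by omega)]
          exact ΛgetL (M-1) (by omega)
        rw [h2, h1]
        show List.Lex _ (distVector (link C x) RM (targetSet C x S)) (distVector (link C x)
          (Γ[M-1]'(by rw [hMeq]; exact Nat.lt_succ_of_le (Nat.sub_le M 1))).tail (targetSet C x S))
        rw [← List.cons_head?_tail hRMhd,
          ← List.cons_head?_tail (List.head?_eq_head (Rne (M-1) (by omega))),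
          distVector_cons, distVector_cons]
        apply List.Lex.rel
        have hv0 : vdistSets (link C x) {y} (targetSet C x S) = 0 :=
          vdist_single_zero hbigL hyT
        rw [hv0, hvdRhead (M-1) (by omega), vd1 (M-1) (by omega)]
        norm_num
    · intro L hL
      have h1 : Λ.head? = some (Λ[0]'(by omega)) := by
        rw [List.head?_eq_getElem?]
        exact List.getElem?_eq_getElem (by omega)
      rw [h1] at hL
      injection hL with hL
      rw [← hL, ΛgetL 0 (by omega)]
      exact admL 0 (by omega)
    · rw [List.Chain', List.isChain_iff_getElem]
      intro i hi
      have hiM : i < M := by omega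
      rcases lt_or_ge (i+1) M with h | h
      · rw [ΛgetL i hiM, ΛgetL (i+1) h]
        exact consL i h
      · have h1 : Λ[i+1]'(by omega) = RM := by
          rw [getElem_list_congr (l := Λ) (show i + 1 = M from by omega)]
          exact ΛgetM
        have h2 : Λ[i]'(by omega) = (Γ[M-1]'(by omega)).tail := by
          rw [getElem_list_congr (l := Λ) (show i = M - 1 from by omega)]
          exact ΛgetL (M-1) (by omega)
        rw [h2, h1]
        refine ⟨⟨ℓ, hlastR, ?_⟩, hRMadm, ?_⟩
        · rw [Rset (M-1) (by omega), hRMfs]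
          exact sdiff_erase_eq hℓdiff hxM (Ne.symm hxl)
        · intro A hp hadm
          exact hRMmax A hp hadm
  have hx'y : x' ≠ y := by
    intro he
    have h1 := hvdRhead 0 (by omega)
    rw [← hx'def] at h1
    rw [vd1 0 (by omega)] at h1
    have h2 : vdistSets (link C x) {y} (targetSet C x S) = 0 :=
      vdist_single_zero hbigL hyT
    rw [he, h2] at h1
    norm_num at h1
  have hheads : ∀ (j : ℕ) (hj : j < Λ.length - 1),
      (Λ[j]'(lt_of_lt_of_le hj (Nat.sub_le _ _))).head? = some x' := by
    intro j hj
    have hjM : j < M := by omega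
    rw [ΛgetL j hjM]
    exact headsL j hjM
  have hlastΛ : ∀ L, Λ.getLast? = some L → L.head? = some y := by
    intro L hL
    have h1 : Λ.getLast? = some (Λ[M]'(by omega)) := by
      have hidx : Λ.length - 1 = M := by omega
      rw [List.getLast?_eq_getElem?, hidx]
      exact List.getElem?_eq_getElem (by omega)
    rw [h1] at hL
    injection hL with hL
    rw [← hL, ΛgetM]
    exact hRMhd
  have hz0Λ : ∀ L, Λ.head? = some L → z ∈ L.toFinset := by
    intro L hL
    have h1 : Λ.head? = some (Λ[0]'(by omega)) := by
      rw [List.head?_eq_getElem?]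
      exact List.getElem?_eq_getElem (by omega)
    rw [h1] at hL
    injection hL with hL
    rw [← hL, ΛgetL 0 (by omega)]
    exact zR0
  have happ := ih (d-1) (by omega) (link C x) (pure_link hpure)
    (flag_link hflag (mem_verts (hfac 0 (by omega)) (hxmem 0 (by omega))))
    (targetSet C x S) Λ x' y z mcpΛ hheads hlastΛ hx'y hz0Λ hzLy
  intro j hj
  rcases lt_or_ge j M with h | h
  · have h1 := happ j (by omega)
    rw [ΛgetL j h, Rset j h] at h1
    exact Finset.mem_of_mem_erase h1
  · have hjM : j = M := by omega
    have he : Γ[j]'hj = Γ[M]'(by omega) := by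
      rw [getElem_list_congr (l := Γ) hjM]
    have h1 := happ M (by omega)
    rw [ΛgetM, hRMfs] at h1
    rw [he]
    exact Finset.mem_of_mem_erase h1

end MCP

set_option maxHeartbeats 1000000 in
open MCP in
/-- Lemma on containment of `z`: in a flag normal complex, if `x` and
`y` are consecutive anchors along a monotone conservative path (the facets at positions
`i ≤ p < m` being anchored at `x` and `F_m` being the first facet anchored at `y`),
and `z` is a neighbor of `y` belonging to the facet at position `i`, then `z` belongs
to every facet at positions `i` through `m`. -/
theorem statement8 {V : Type} [DecidableEq V] [Fintype V] (d : ℕ)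
    (C : Finset (Finset V)) (hpure : Pure C d) (hnormal : Normal C) (hflag : MCP.Flag C)
    (S : Finset V) (hS : S.Nonempty) (hSv : S ⊆ verts C)
    (Γ : List (List V)) (hmc : MonoConsPath C S Γ)
    (x y z : V) (i m : ℕ) (him : i < m) (hm : m < Γ.length) (hxy : x ≠ y)
    (hanchx : ∀ p L, i ≤ p → p < m → Γ[p]? = some L → L.head? = some x)
    (hanchy : ∀ L, Γ[m]? = some L → L.head? = some y)
    (hzy : (skeleton C).Adj z y)
    (hz : ∀ L, Γ[i]? = some L → z ∈ L.toFinset) :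
    ∀ j L, i ≤ j → j ≤ m → Γ[j]? = some L → z ∈ L.toFinset := by
  set Δ : List (List V) := (Γ.drop i).take (m - i + 1) with hΔdef
  have hΔlen : Δ.length = m - i + 1 := by
    rw [hΔdef, List.length_take, List.length_drop]
    omega
  have hΔget : ∀ (k : ℕ) (hk : k < m - i + 1), Δ[k]'(by omega) = Γ[i+k]'(by omega) := by
    intro k hk
    show ((Γ.drop i).take (m - i + 1))[k]'
      (by rw [List.length_take, List.length_drop]; omega) = Γ[i+k]'(by omega)
    rw [List.getElem_take, List.getElem_drop]
  have hΔinfix : Δ <:+: Γ :=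
    (List.take_prefix _ _).isInfix.trans (List.drop_suffix i Γ).isInfix
  have hmcΔ : MonoConsPath C S Δ := by
    refine ⟨⟨fun L hL => hmc.1.1 L (hΔinfix.sublist.subset hL),
      List.IsChain.infix hmc.1.2 hΔinfix⟩,
      List.IsChain.infix hmc.2.1 hΔinfix, ?_,
      List.IsChain.infix hmc.2.2.2 hΔinfix⟩
    intro L hL
    have h1 : Δ.head? = some (Δ[0]'(by omega)) := by
      rw [List.head?_eq_getElem?]
      exact List.getElem?_eq_getElem (by omega)
    rw [h1] at hL
    injection hL with hL
    rw [← hL, hΔget 0 (by omega)]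
    exact monoCons_adm hmc (show i + 0 < Γ.length by omega)
  have hheads : ∀ (k : ℕ) (hk : k < Δ.length - 1),
      (Δ[k]'(lt_of_lt_of_le hk (Nat.sub_le _ _))).head? = some x := by
    intro k hk
    rw [hΔget k (by omega)]
    exact hanchx (i+k) _ (by omega) (by omega) (List.getElem?_eq_getElem (by omega))
  have hlastΔ : ∀ L, Δ.getLast? = some L → L.head? = some y := by
    intro L hL
    have h1 : Δ.getLast? = some (Δ[m-i]'(by omega)) := by
      have hidx : Δ.length - 1 = m - i := by omega
      rw [List.getLast?_eq_getElem?, hidx]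
      exact List.getElem?_eq_getElem (by omega)
    rw [h1] at hL
    injection hL with hL
    rw [← hL, hΔget (m-i) (by omega)]
    have he : Γ[i + (m-i)]'(by omega) = Γ[m]'(by omega) :=
      getElem_list_congr (show i + (m - i) = m from by omega)
    rw [he]
    exact hanchy _ (List.getElem?_eq_getElem (by omega))
  have hz0Δ : ∀ L, Δ.head? = some L → z ∈ L.toFinset := by
    intro L hL
    have h1 : Δ.head? = some (Δ[0]'(by omega)) := by
      rw [List.head?_eq_getElem?]
      exact List.getElem?_eq_getElem (by omega)
    rw [h1] at hL
    injection hL with hL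
    rw [← hL, hΔget 0 (by omega)]
    have he : Γ[i + 0]'(by omega) = Γ[i]'(by omega) :=
      getElem_list_congr (show i + 0 = i from by omega)
    rw [he]
    exact hz _ (List.getElem?_eq_getElem (by omega))
  have happ := main_lemma d C hpure hflag S Δ x y z hmcΔ hheads hlastΔ hxy hz0Δ hzy
  intro j L hij hjm hL
  have hjN : j < Γ.length := by omega
  rw [List.getElem?_eq_getElem hjN] at hL
  injection hL with hL
  have h1 := happ (j - i) (by omega)
  rw [hΔget (j-i) (by omega)] at h1
  have he : Γ[i + (j-i)]'(by omega) = Γ[j]'hjN :=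
    getElem_list_congr (show i + (j - i) = j from by omega)
  rw [he] at h1
  rw [← hL]
  exact h1
end
end

section
/- Let k≥2, let C be a pure simplicial complex, and let x be a vertex of C. If C is k-banner, then the link lk_C(x) is (k−1)-banner. -/
/-! Common definitions: pure simplicial complexes (represented by their facet sets),
vertex-distance, links, ordered facets, vectors of distances, admissibility, and
monotone/conservative dual paths, following Adiprasito–Benedetti's combinatorial
segments. -/

open scoped Classical

noncomputable section

open MCP in
/-- the link of a vertex of a `k`-banner pure complex is
`(k-1)`-banner. -/
theorem statement14 {V : Type} [DecidableEq V] [Fintype V] (d k : ℕ) (hk : 2 ≤ k)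
    (C : Finset (Finset V)) (hpure : Pure C d)
    (x : V) (hx : x ∈ verts C) (hb : Banner C k) :
    Banner (link C x) (k - 1) := by
  intro T ⟨hclique, v, hvT, hface⟩ hcard
  have hcard' : k ≤ T.card := by omega
  -- every vertex of T lies in some facet of C containing x, and differs from x
  have key : ∀ u ∈ T, u ≠ x ∧ (skeleton C).Adj x u := by
    intro u hu
    -- pick another vertex of T
    have h2 : 2 ≤ T.card := by omega
    obtain ⟨w, hwT, hwu⟩ : ∃ w ∈ T, w ≠ u := by
      by_contra h
      push_neg at h
      have : T ⊆ {u} := fun z hz => Finset.mem_singleton.mpr (h z hz)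
      have := Finset.card_le_card this
      simp at this; omega
    obtain ⟨hne, G, hG, hwG, huG⟩ := hclique w hwT u hu hwu
    simp only [link, Finset.mem_image, Finset.mem_filter] at hG
    obtain ⟨F, ⟨hFC, hxF⟩, rfl⟩ := hG
    have hux : u ≠ x := (Finset.mem_erase.mp huG).1
    exact ⟨hux, hux.symm, F, hFC, hxF, (Finset.mem_erase.mp huG).2⟩
  have hxT : x ∉ T := fun h => (key x h).1 rfl
  -- insert x T is a critical clique of C
  have hcc : CriticalClique C (insert x T) := by
    constructor
    · intro a ha b hb hab
      rcases Finset.mem_insert.mp ha with hax | ha2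
      · rcases Finset.mem_insert.mp hb with hbx | hb2
        · exact absurd (hax.trans hbx.symm) hab
        · rw [hax]; exact (key b hb2).2
      · rcases Finset.mem_insert.mp hb with hbx | hb2
        · rw [hbx]; exact ((key a ha2).2).symm
        · -- both in T : adjacency in skeleton (link C x) transfers to skeleton C
          obtain ⟨hne, G, hG, haG, hbG⟩ := hclique a ha2 b hb2 hab
          simp only [link, Finset.mem_image, Finset.mem_filter] at hG
          obtain ⟨F, ⟨hFC, hxF⟩, rfl⟩ := hG
          exact ⟨hab, F, hFC, Finset.erase_subset x F haG, Finset.erase_subset x F hbG⟩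
    · refine ⟨v, Finset.mem_insert.mpr (Or.inr hvT), ?_⟩
      obtain ⟨G, hG, hsub⟩ := hface
      simp only [link, Finset.mem_image, Finset.mem_filter] at hG
      obtain ⟨F, ⟨hFC, hxF⟩, rfl⟩ := hG
      refine ⟨F, hFC, ?_⟩
      intro a ha
      rw [Finset.mem_erase, Finset.mem_insert] at ha
      rcases ha.2 with rfl | haT
      · exact hxF
      · exact Finset.erase_subset x F (hsub (Finset.mem_erase.mpr ⟨ha.1, haT⟩))
  have hbig : k + 1 ≤ (insert x T).card := by
    rw [Finset.card_insert_of_notMem hxT]; omega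
  obtain ⟨F, hFC, hsub⟩ := hb _ hcc hbig
  have hxF : x ∈ F := hsub (Finset.mem_insert_self x T)
  refine ⟨F.erase x, ?_, ?_⟩
  · simp only [link, Finset.mem_image, Finset.mem_filter]
    exact ⟨F, ⟨hFC, hxF⟩, rfl⟩
  · intro a ha
    exact Finset.mem_erase.mpr ⟨(key a ha).1, hsub (Finset.mem_insert_of_mem ha)⟩
end
end
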